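/- Let a_1(ε),...,a_n(ε) and b_1(ε),...,b_{n'}(ε) be positive functions of ε > 0 such that for every i, i' the limit lim_{ε↓0} a_i(ε)/b_{i'}(ε) exists in the extended interval [0,∞]. Then the limit lim_{ε↓0} (a_1(ε)+...+a_n(ε))/(b_1(ε)+...+b_{n'}(ε)) also exists in [0,∞]. -/
import Mathlib


open Filter Topology Set

lemma ofReal_div_inv (x y : ℝ) (hx : 0 < x) (hy : 0 < y) :
    (ENNReal.ofReal (x / y))⁻¹ = ENNReal.ofReal (y / x) := by
  rw [ENNReal.ofReal_div_of_pos hy, ENNReal.ofReal_div_of_pos hx,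
    ENNReal.inv_div (Or.inl ENNReal.ofReal_ne_top)
      (Or.inl (ENNReal.ofReal_pos.mpr hy).ne')]

/-- Lemma on sums of positive functions: if all ratios `a i / b i'` converge in `[0,∞]`
as `ε ↓ 0`, then so does the ratio of the sums. -/
theorem stmt0 (n n' : ℕ) (hn : 0 < n) (hn' : 0 < n')
    (a : Fin n → ℝ → ℝ) (b : Fin n' → ℝ → ℝ)
    (ha : ∀ i, ∀ ε > (0:ℝ), 0 < a i ε) (hb : ∀ i', ∀ ε > (0:ℝ), 0 < b i' ε)
    (hlim : ∀ i i', ∃ L : ENNReal,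
      Tendsto (fun ε => ENNReal.ofReal (a i ε / b i' ε)) (𝓝[>] (0:ℝ)) (𝓝 L)) :
    ∃ L : ENNReal,
      Tendsto (fun ε => ENNReal.ofReal ((∑ i, a i ε) / (∑ i', b i' ε)))
        (𝓝[>] (0:ℝ)) (𝓝 L) := by
  classical
  have hev : ∀ᶠ ε in 𝓝[>] (0:ℝ), (0:ℝ) < ε := eventually_mem_nhdsWithin
  choose L hL using hlim
  -- sum of b is eventually positive
  have hsb : ∀ ε > (0:ℝ), 0 < ∑ i', b i' ε := fun ε hε =>
    Finset.sum_pos (fun i' _ => hb i' ε hε) (Finset.univ_nonempty_iff.mpr ⟨⟨0, hn'⟩⟩)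
  -- inverse ratios converge
  have hinv : ∀ i i', Tendsto (fun ε => ENNReal.ofReal (b i' ε / a i ε)) (𝓝[>] (0:ℝ))
      (𝓝 (L i i')⁻¹) := by
    intro i i'
    refine ((hL i i').inv).congr' ?_
    filter_upwards [hev] with ε hε
    exact ofReal_div_inv _ _ (ha i ε hε) (hb i' ε hε)
  -- sums of inverse ratios converge
  set M : Fin n → ENNReal := fun i => ∑ i', (L i i')⁻¹ with hM
  have hsum : ∀ i, Tendsto (fun ε => ENNReal.ofReal ((∑ i', b i' ε) / a i ε))
      (𝓝[>] (0:ℝ)) (𝓝 (M i)) := by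
    intro i
    have := tendsto_finset_sum (Finset.univ : Finset (Fin n'))
      (fun i' _ => hinv i i')
    refine this.congr' ?_
    filter_upwards [hev] with ε hε
    rw [← ENNReal.ofReal_sum_of_nonneg
      (fun i' _ => div_nonneg (hb i' ε hε).le (ha i ε hε).le), ← Finset.sum_div]
  -- each a i / sum b converges
  have hai : ∀ i, Tendsto (fun ε => ENNReal.ofReal (a i ε / ∑ i', b i' ε))
      (𝓝[>] (0:ℝ)) (𝓝 (M i)⁻¹) := by
    intro i
    refine ((hsum i).inv).congr' ?_
    filter_upwards [hev] with ε hε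
    exact ofReal_div_inv _ _ (hsb ε hε) (ha i ε hε)
  refine ⟨∑ i, (M i)⁻¹, ?_⟩
  have := tendsto_finset_sum (Finset.univ : Finset (Fin n)) (fun i _ => hai i)
  refine this.congr' ?_
  filter_upwards [hev] with ε hε
  rw [← ENNReal.ofReal_sum_of_nonneg
    (fun i _ => div_nonneg (ha i ε hε).le (hsb ε hε).le), ← Finset.sum_div]
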